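/- Let θ ∈ [0,1] and let μ₁, μ₂ be the probability measures on {−1,1} with μ₁({1}) = (1+θ)/2 and μ₂({1}) = (1−θ)/2. Let n ≥ 1, ε₁,…,ε_n ∈ (0,1], and for each i let Cᵢ be an εᵢ-LDP Markov kernel from {−1,1} to a measurable space Yᵢ. Let P₁ = ⊗_{i=1}^n (Cᵢ)∗μ₁ and P₂ = ⊗_{i=1}^n (Cᵢ)∗μ₂, where (Cᵢ)∗μ denotes the law of Cᵢ(X) when X ∼ μ. Then min( KL(P₁ ‖ P₂), KL(P₂ ‖ P₁) ) ≤ 8 θ² Σ_{i=1}^n εᵢ². -/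

import Mathlib

open MeasureTheory ProbabilityTheory Real
open scoped ENNReal BigOperators

open Classical in
/-- Kullback–Leibler divergence `KL(P‖Q)`: equal to `∫ log (dP/dQ) dP` when `P ≪ Q` and the
log-likelihood ratio is `P`-integrable, and `∞` otherwise. -/
noncomputable def klDiv {α : Type*} [MeasurableSpace α] (P Q : Measure α) : ℝ≥0∞ :=
  if P ≪ Q ∧ Integrable (fun x => Real.log (P.rnDeriv Q x).toReal) P then
    ENNReal.ofReal (∫ x, Real.log (P.rnDeriv Q x).toReal ∂P)
  else ⊤

/-- A kernel `C` is `ε`-LDP on a set `s` of inputs if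
`C x W ≤ e^ε · C x' W` for all `x, x' ∈ s` and measurable `W`. -/
def IsLDPOn {α β : Type*} [MeasurableSpace α] [MeasurableSpace β]
    (C : ProbabilityTheory.Kernel α β) (ε : ℝ) (s : Set α) : Prop :=
  ∀ x ∈ s, ∀ x' ∈ s, ∀ W : Set β, MeasurableSet W →
    C x W ≤ ENNReal.ofReal (Real.exp ε) * C x' W

section Aux

lemma lintegral_pi_fin_prod : ∀ {n : ℕ} {E : Fin n → Type} [inst : ∀ i, MeasurableSpace (E i)]
    (μ : ∀ i, Measure (E i)) [∀ i, SigmaFinite (μ i)] (f : ∀ i, E i → ℝ≥0∞)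
    (_ : ∀ i, Measurable (f i)),
    ∫⁻ x, ∏ i, f i (x i) ∂Measure.pi μ = ∏ i, ∫⁻ x, f i x ∂μ i := by
  intro n
  induction n with
  | zero => intro E _ μ _ f hf; simp
  | succ n ih =>
    intro E _ μ _ f hf
    have hmp := (MeasureTheory.measurePreserving_piFinSuccAbove μ 0).symm
    have hmeas : Measurable fun x : (i : Fin (n+1)) → E i => ∏ i, f i (x i) :=
      Finset.measurable_prod _ fun i _ => (hf i).comp (measurable_pi_apply i)
    rw [← hmp.lintegral_comp hmeas]
    simp_rw [MeasurableEquiv.piFinSuccAbove_symm_apply, Fin.insertNthEquiv,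
      Fin.prod_univ_succ, Fin.insertNth_zero, Equiv.coe_fn_mk]
    simp only [Fin.zero_succAbove, cast_eq, Function.comp_def, Fin.cons_zero, Fin.cons_succ]
    have hg : Measurable fun b : (j : Fin n) → E j.succ => ∏ x : Fin n, f x.succ (b x) :=
      Finset.measurable_prod _ fun i _ => (hf i.succ).comp (measurable_pi_apply i)
    change ∫⁻ z : E 0 × ((j : Fin n) → E j.succ), f 0 z.1 * ∏ x : Fin n, f x.succ (z.2 x)
      ∂(μ 0).prod (Measure.pi fun j => μ j.succ) = _
    rw [lintegral_prod_mul (f := f 0) (g := fun b : (j : Fin n) → E j.succ =>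
      ∏ x : Fin n, f x.succ (b x)) (hf 0).aemeasurable hg.aemeasurable]
    rw [ih _ _ (fun i => hf i.succ)]

lemma map_eval_pi {n : ℕ} {E : Fin n → Type} [∀ i, MeasurableSpace (E i)]
    (μ : ∀ i, Measure (E i)) [∀ i, IsProbabilityMeasure (μ i)] (i : Fin n) :
    (Measure.pi μ).map (Function.eval i) = μ i := by
  ext s hs
  rw [Measure.map_apply (measurable_pi_apply i) hs, Set.eval_preimage, Measure.pi_pi]
  rw [Fintype.prod_eq_single i (fun j hj => by simp [Function.update_of_ne hj])]
  simp

lemma keyIneq {x y : ℝ≥0∞} {a b c E : ℝ} (hb : 0 ≤ b) (hc : 0 ≤ c)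
    (hd : 0 ≤ a - c * b) (hE : 0 ≤ E) (hg : (a - c * b) * E ≤ c * a - b)
    (hxy : x ≤ ENNReal.ofReal E * y) :
    ENNReal.ofReal a * x + ENNReal.ofReal b * y ≤
      ENNReal.ofReal c * (ENNReal.ofReal b * x + ENNReal.ofReal a * y) := by
  have ha : ENNReal.ofReal a = ENNReal.ofReal (c * b) + ENNReal.ofReal (a - c * b) := by
    rw [← ENNReal.ofReal_add (mul_nonneg hc hb) hd]; ring_nf
  calc ENNReal.ofReal a * x + ENNReal.ofReal b * y
      = ENNReal.ofReal (c * b) * x + (ENNReal.ofReal (a - c * b) * x + ENNReal.ofReal b * y) := by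
        rw [ha, add_mul]; ring
    _ ≤ ENNReal.ofReal (c * b) * x +
        (ENNReal.ofReal (a - c * b) * (ENNReal.ofReal E * y) + ENNReal.ofReal b * y) := by
        gcongr
    _ = ENNReal.ofReal (c * b) * x + ENNReal.ofReal ((a - c * b) * E + b) * y := by
        rw [ENNReal.ofReal_add (mul_nonneg hd hE) hb, ENNReal.ofReal_mul hd, add_mul, mul_assoc]
    _ ≤ ENNReal.ofReal (c * b) * x + ENNReal.ofReal (c * a) * y :=
        add_le_add le_rfl (mul_le_mul_of_nonneg_right (ENNReal.ofReal_le_ofReal (by linarith)) (by positivity))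
    _ = ENNReal.ofReal c * (ENNReal.ofReal b * x + ENNReal.ofReal a * y) := by
        rw [mul_add, ← mul_assoc, ← mul_assoc, ← ENNReal.ofReal_mul hc, ← ENNReal.ofReal_mul hc]

lemma rnDeriv_bounds {β : Type} [MeasurableSpace β] (P Q : Measure β)
    [IsProbabilityMeasure P] [IsProbabilityMeasure Q] {c : ℝ} (hc : 1 ≤ c)
    (h₁ : ∀ s, MeasurableSet s → P s ≤ ENNReal.ofReal c * Q s)
    (h₂ : ∀ s, MeasurableSet s → Q s ≤ ENNReal.ofReal c * P s) :
    P ≪ Q ∧ (∀ᵐ x ∂Q, P.rnDeriv Q x ≤ ENNReal.ofReal c)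
      ∧ (∀ᵐ x ∂Q, (ENNReal.ofReal c)⁻¹ ≤ P.rnDeriv Q x) := by
  have hc0 : (0:ℝ) < c := lt_of_lt_of_le one_pos hc
  have hcne : ENNReal.ofReal c ≠ 0 := by simp [hc0]
  have hctop : ENNReal.ofReal c ≠ ∞ := ENNReal.ofReal_ne_top
  have hac : P ≪ Q := by
    refine Measure.AbsolutelyContinuous.mk fun s hs h0 => ?_
    have := h₁ s hs
    rw [h0, mul_zero] at this
    exact le_antisymm this (by simp)
  refine ⟨hac, ?_, ?_⟩
  · refine ae_le_of_forall_setLIntegral_le_of_sigmaFinite (Measure.measurable_rnDeriv _ _)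
      fun s hs _ => ?_
    rw [Measure.setLIntegral_rnDeriv hac s]
    calc P s ≤ ENNReal.ofReal c * Q s := h₁ s hs
      _ = ∫⁻ _ in s, ENNReal.ofReal c ∂Q := by rw [setLIntegral_const]
  · refine (ae_le_of_forall_setLIntegral_le_of_sigmaFinite measurable_const
      fun s hs _ => ?_)
    rw [Measure.setLIntegral_rnDeriv hac s, setLIntegral_const]
    rw [ENNReal.inv_mul_le_iff hcne hctop]
    exact h₂ s hs

lemma pi_eq_withDensity {n : ℕ} {E : Fin n → Type} [∀ i, MeasurableSpace (E i)]
    (μ ν : ∀ i, Measure (E i)) [∀ i, IsProbabilityMeasure (μ i)]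
    [∀ i, IsProbabilityMeasure (ν i)] (hac : ∀ i, μ i ≪ ν i) :
    Measure.pi μ = (Measure.pi ν).withDensity
      (fun y => ∏ i, (μ i).rnDeriv (ν i) (y i)) := by
  have hr : ∀ i, Measurable ((μ i).rnDeriv (ν i)) := fun i => Measure.measurable_rnDeriv _ _
  refine Measure.pi_eq fun s hs => ?_
  rw [withDensity_apply _ (MeasurableSet.univ_pi hs)]
  have : ∫⁻ y in Set.pi Set.univ s, ∏ i, (μ i).rnDeriv (ν i) (y i) ∂(Measure.pi ν)
      = ∫⁻ y, ∏ i, (s i).indicator ((μ i).rnDeriv (ν i)) (y i) ∂(Measure.pi ν) := by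
    rw [← lintegral_indicator (MeasurableSet.univ_pi hs)]
    congr 1
    funext y
    by_cases hy : y ∈ Set.pi Set.univ s
    · rw [Set.indicator_of_mem hy]
      refine Finset.prod_congr rfl fun i _ => ?_
      rw [Set.indicator_of_mem (hy i (Set.mem_univ i))]
    · rw [Set.indicator_of_notMem hy]
      rw [Set.mem_univ_pi, not_forall] at hy
      obtain ⟨i, hi⟩ := hy
      refine (Finset.prod_eq_zero (Finset.mem_univ i) ?_).symm
      rw [Set.indicator_of_notMem hi]
  rw [this, lintegral_pi_fin_prod ν _ (fun i => (hr i).indicator (hs i))]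
  exact Finset.prod_congr rfl fun i _ => by
    rw [lintegral_indicator (hs i), Measure.setLIntegral_rnDeriv (hac i)]

lemma toReal_bounds {c : ℝ} (hc : 1 ≤ c) {r : ℝ≥0∞}
    (hlb : (ENNReal.ofReal c)⁻¹ ≤ r) (hub : r ≤ ENNReal.ofReal c) :
    c⁻¹ ≤ r.toReal ∧ r.toReal ≤ c := by
  have hc0 : (0:ℝ) < c := lt_of_lt_of_le one_pos hc
  have hrtop : r ≠ ∞ := ne_top_of_le_ne_top ENNReal.ofReal_ne_top hub
  constructor
  · have := ENNReal.toReal_mono hrtop hlb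
    rwa [ENNReal.toReal_inv, ENNReal.toReal_ofReal hc0.le] at this
  · exact ENNReal.toReal_le_of_le_ofReal hc0.le hub

lemma abs_log_le_of_bounds {c t : ℝ} (hc : 1 ≤ c) (h1 : c⁻¹ ≤ t) (h2 : t ≤ c) :
    |Real.log t| ≤ Real.log c := by
  have hc0 : (0:ℝ) < c := lt_of_lt_of_le one_pos hc
  have ht0 : 0 < t := lt_of_lt_of_le (by positivity) h1
  rw [abs_le]
  constructor
  · calc -Real.log c = Real.log c⁻¹ := by rw [Real.log_inv]
      _ ≤ Real.log t := Real.log_le_log (by positivity) h1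
  · exact Real.log_le_log ht0 h2

lemma coord_KL_bound {β : Type} [MeasurableSpace β] (P Q : Measure β)
    [IsProbabilityMeasure P] [IsProbabilityMeasure Q] {c : ℝ} (hc : 1 ≤ c) (hac : P ≪ Q)
    (hub : ∀ᵐ x ∂Q, P.rnDeriv Q x ≤ ENNReal.ofReal c)
    (hlb : ∀ᵐ x ∂Q, (ENNReal.ofReal c)⁻¹ ≤ P.rnDeriv Q x) :
    ∫ x, Real.log (P.rnDeriv Q x).toReal ∂P ≤ (c - 1)^2 := by
  have hc0 : (0:ℝ) < c := lt_of_lt_of_le one_pos hc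
  set t : β → ℝ := fun x => (P.rnDeriv Q x).toReal with ht
  have htmeas : Measurable t := (Measure.measurable_rnDeriv P Q).ennreal_toReal
  have hbnd : ∀ᵐ x ∂Q, c⁻¹ ≤ t x ∧ t x ≤ c := by
    filter_upwards [hub, hlb] with x h1 h2 using toReal_bounds hc h2 h1
  have hcm : ∫ x, Real.log (t x) ∂P = ∫ x, t x * Real.log (t x) ∂Q := by
    rw [← MeasureTheory.integral_rnDeriv_smul hac]
    simp [smul_eq_mul, ht]
  rw [hcm]
  have hint_t : Integrable t Q := by
    refine Integrable.mono' (integrable_const c) htmeas.aestronglyMeasurable ?_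
    filter_upwards [hbnd] with x hx
    rw [Real.norm_eq_abs, abs_of_nonneg (le_trans (by positivity) hx.1)]
    exact hx.2
  have hphi_meas : Measurable fun x => t x * Real.log (t x) - t x + 1 :=
    ((htmeas.mul (htmeas.log)).sub htmeas).add measurable_const
  have hint_phi : Integrable (fun x => t x * Real.log (t x) - t x + 1) Q := by
    refine Integrable.mono' (integrable_const (c * |Real.log c| + c + 1))
      hphi_meas.aestronglyMeasurable ?_
    filter_upwards [hbnd] with x hx
    have ht0 : 0 < t x := lt_of_lt_of_le (by positivity) hx.1
    have hlog : |Real.log (t x)| ≤ |Real.log c| :=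
      le_trans (abs_log_le_of_bounds hc hx.1 hx.2) (le_abs_self _)
    rw [Real.norm_eq_abs]
    calc |t x * Real.log (t x) - t x + 1| ≤ |t x * Real.log (t x) - t x| + |1| := abs_add_le _ _
      _ ≤ |t x * Real.log (t x)| + |t x| + 1 := by
          rw [abs_one]; linarith [abs_sub (t x * Real.log (t x)) (t x)]
      _ ≤ c * |Real.log c| + c + 1 := by
          rw [abs_mul, abs_of_nonneg ht0.le]
          have h1 : t x * |Real.log (t x)| ≤ c * |Real.log c| :=
            mul_le_mul hx.2 hlog (abs_nonneg _) hc0.le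
          linarith
  have hint_tl : Integrable (fun x => t x * Real.log (t x)) Q := by
    have : (fun x => t x * Real.log (t x))
        = fun x => (t x * Real.log (t x) - t x + 1) + (t x - 1) := by funext x; ring
    rw [this]
    exact hint_phi.add (hint_t.sub (integrable_const 1))
  have hintt1 : ∫ x, t x ∂Q = 1 := by
    rw [ht]
    rw [Measure.integral_toReal_rnDeriv hac]
    simp
  have hsub : Integrable (fun x => t x * Real.log (t x) - t x) Q := hint_tl.sub hint_t
  have hsplit : ∫ x, (t x * Real.log (t x) - t x + 1) ∂Q
      = ∫ x, t x * Real.log (t x) ∂Q := by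
    rw [integral_add hsub (integrable_const 1), integral_sub hint_tl hint_t, hintt1]
    simp
  rw [← hsplit]
  calc ∫ x, (t x * Real.log (t x) - t x + 1) ∂Q ≤ ∫ _x, (c-1)^2 ∂Q := by
        refine integral_mono_ae hint_phi (integrable_const _) ?_
        filter_upwards [hbnd] with x hx
        have ht0 : 0 < t x := lt_of_lt_of_le (by positivity) hx.1
        have hlog : Real.log (t x) ≤ t x - 1 := Real.log_le_sub_one_of_pos ht0
        have h1 : t x * Real.log (t x) ≤ t x * (t x - 1) :=
          mul_le_mul_of_nonneg_left hlog ht0.le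
        have hinv : c⁻¹ * c = 1 := inv_mul_cancel₀ hc0.ne'
        nlinarith [sq_nonneg (t x - 1), sq_nonneg (c - t x), hx.1, hx.2,
          mul_pos ht0 hc0, mul_le_mul_of_nonneg_left hx.2 hc0.le]
    _ = (c-1)^2 := by simp

lemma klDiv_pi_le {n : ℕ} {Y : Fin n → Type} [∀ i, MeasurableSpace (Y i)]
    (ν₁ ν₂ : ∀ i, Measure (Y i)) [∀ i, IsProbabilityMeasure (ν₁ i)]
    [∀ i, IsProbabilityMeasure (ν₂ i)] (c : Fin n → ℝ) (hc : ∀ i, 1 ≤ c i)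
    (h₁ : ∀ i, ∀ s, MeasurableSet s → ν₁ i s ≤ ENNReal.ofReal (c i) * ν₂ i s)
    (h₂ : ∀ i, ∀ s, MeasurableSet s → ν₂ i s ≤ ENNReal.ofReal (c i) * ν₁ i s) :
    klDiv (Measure.pi ν₁) (Measure.pi ν₂) ≤ ENNReal.ofReal (∑ i, (c i - 1)^2) := by
  have hco := fun i => rnDeriv_bounds (ν₁ i) (ν₂ i) (hc i) (h₁ i) (h₂ i)
  have hac : ∀ i, ν₁ i ≪ ν₂ i := fun i => (hco i).1
  have hub := fun i => (hco i).2.1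
  have hlb := fun i => (hco i).2.2
  have hrmeas : ∀ i, Measurable ((ν₁ i).rnDeriv (ν₂ i)) :=
    fun i => Measure.measurable_rnDeriv _ _
  have hF : Measurable fun y : (i : Fin n) → Y i => ∏ i, (ν₁ i).rnDeriv (ν₂ i) (y i) :=
    Finset.measurable_prod _ fun i _ => (hrmeas i).comp (measurable_pi_apply i)
  have hPd : Measure.pi ν₁ = (Measure.pi ν₂).withDensity
      (fun y => ∏ i, (ν₁ i).rnDeriv (ν₂ i) (y i)) := pi_eq_withDensity ν₁ ν₂ hac
  have hacP : Measure.pi ν₁ ≪ Measure.pi ν₂ :=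
    hPd ▸ withDensity_absolutelyContinuous _ _
  have hrd : (Measure.pi ν₁).rnDeriv (Measure.pi ν₂)
      =ᵐ[Measure.pi ν₂] fun y => ∏ i, (ν₁ i).rnDeriv (ν₂ i) (y i) := by
    rw [hPd]; exact Measure.rnDeriv_withDensity _ hF
  have hgood : ∀ᵐ y ∂(Measure.pi ν₂), ∀ i,
      (ENNReal.ofReal (c i))⁻¹ ≤ (ν₁ i).rnDeriv (ν₂ i) (y i)
        ∧ (ν₁ i).rnDeriv (ν₂ i) (y i) ≤ ENNReal.ofReal (c i) := by
    rw [ae_all_iff]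
    intro i
    exact Measure.tendsto_eval_ae_ae.eventually ((hlb i).and (hub i))
  have hgood1 := hgood.filter_mono hacP.ae_le
  have hrd1 := hrd.filter_mono hacP.ae_le
  have hLG : (fun y => Real.log (((Measure.pi ν₁).rnDeriv (Measure.pi ν₂) y).toReal))
      =ᵐ[Measure.pi ν₁]
        (fun y => ∑ i, Real.log (((ν₁ i).rnDeriv (ν₂ i) (y i)).toReal)) := by
    filter_upwards [hgood1, hrd1] with y hy hy2
    rw [hy2, ENNReal.toReal_prod, Real.log_prod]
    intro i _
    have hc0 : (0:ℝ) < c i := lt_of_lt_of_le one_pos (hc i)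
    exact ne_of_gt (lt_of_lt_of_le (by positivity)
      (toReal_bounds (hc i) (hy i).1 (hy i).2).1)
  have hgi_meas : ∀ i, Measurable fun x => Real.log (((ν₁ i).rnDeriv (ν₂ i) x).toReal) :=
    fun i => Real.measurable_log.comp (hrmeas i).ennreal_toReal
  have hbound1 : ∀ i, ∀ᵐ x ∂(ν₁ i), (c i)⁻¹ ≤ ((ν₁ i).rnDeriv (ν₂ i) x).toReal
      ∧ ((ν₁ i).rnDeriv (ν₂ i) x).toReal ≤ c i := by
    intro i
    refine Filter.Eventually.filter_mono (hac i).ae_le ?_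
    filter_upwards [hlb i, hub i] with x hx1 hx2 using toReal_bounds (hc i) hx1 hx2
  have hgi_int : ∀ i, Integrable
      (fun x => Real.log (((ν₁ i).rnDeriv (ν₂ i) x).toReal)) (ν₁ i) := by
    intro i
    refine Integrable.mono' (integrable_const (Real.log (c i)))
      (hgi_meas i).aestronglyMeasurable ?_
    filter_upwards [hbound1 i] with x hx
    rw [Real.norm_eq_abs]
    exact abs_log_le_of_bounds (hc i) hx.1 hx.2
  have hmp : ∀ i, MeasurePreserving (Function.eval i) (Measure.pi ν₁) (ν₁ i) :=
    fun i => ⟨measurable_pi_apply i, map_eval_pi ν₁ i⟩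
  have hint_comp : ∀ i, Integrable (fun y : (j : Fin n) → Y j =>
      Real.log (((ν₁ i).rnDeriv (ν₂ i) (y i)).toReal)) (Measure.pi ν₁) := fun i =>
    ((hmp i).integrable_comp (hgi_meas i).aestronglyMeasurable).mpr (hgi_int i)
  have hInt : Integrable
      (fun y => Real.log (((Measure.pi ν₁).rnDeriv (Measure.pi ν₂) y).toReal))
      (Measure.pi ν₁) := by
    have h : Integrable
        (fun y => ∑ i, Real.log (((ν₁ i).rnDeriv (ν₂ i) (y i)).toReal)) (Measure.pi ν₁) :=
      integrable_finset_sum _ fun i _ => hint_comp i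
    exact h.congr hLG.symm
  have hIeq : ∫ y, Real.log (((Measure.pi ν₁).rnDeriv (Measure.pi ν₂) y).toReal)
        ∂(Measure.pi ν₁)
      = ∑ i, ∫ x, Real.log (((ν₁ i).rnDeriv (ν₂ i) x).toReal) ∂(ν₁ i) := by
    rw [integral_congr_ae hLG,
      integral_finset_sum _ (fun i _ => hint_comp i)]
    refine Finset.sum_congr rfl fun i _ => ?_
    have hmap := integral_map (μ := Measure.pi ν₁) (φ := Function.eval i)
      (f := fun x => Real.log (((ν₁ i).rnDeriv (ν₂ i) x).toReal))
      (measurable_pi_apply i).aemeasurable (hgi_meas i).aestronglyMeasurable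
    rw [map_eval_pi ν₁ i] at hmap
    exact hmap.symm
  have hKL : klDiv (Measure.pi ν₁) (Measure.pi ν₂)
      = ENNReal.ofReal (∫ y, Real.log (((Measure.pi ν₁).rnDeriv (Measure.pi ν₂) y).toReal)
        ∂(Measure.pi ν₁)) := by
    simp only [klDiv]
    rw [if_pos ⟨hacP, hInt⟩]
  rw [hKL]
  refine ENNReal.ofReal_le_ofReal ?_
  rw [hIeq]
  exact Finset.sum_le_sum fun i _ =>
    coord_KL_bound (ν₁ i) (ν₂ i) (hc i) (hac i) (hub i) (hlb i)

end Aux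

/-- Let `μ₁, μ₂` be the distributions on `{−1,1}` with
`μ₁({1}) = (1+θ)/2` and `μ₂({1}) = (1−θ)/2`, and let `Cᵢ` be `εᵢ`-LDP Markov kernels on
`{−1,1}` with `εᵢ ∈ (0,1]`.  Then the product distributions `P₁ = ⊗ᵢ (Cᵢ)∗μ₁` and
`P₂ = ⊗ᵢ (Cᵢ)∗μ₂` satisfy `min (KL(P₁‖P₂), KL(P₂‖P₁)) ≤ 8 θ² ∑ᵢ εᵢ²`. -/
theorem stmt5 (θ : ℝ) (hθ : θ ∈ Set.Icc (0 : ℝ) 1)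
    (n : ℕ) (hn : 1 ≤ n) (ε : Fin n → ℝ) (hε : ∀ i, ε i ∈ Set.Ioc (0 : ℝ) 1)
    (Y : Fin n → Type) [mY : ∀ i, MeasurableSpace (Y i)]
    (C : ∀ i, ProbabilityTheory.Kernel ℝ (Y i)) [∀ i, IsMarkovKernel (C i)]
    (hLDP : ∀ i, IsLDPOn (C i) (ε i) ({-1, 1} : Set ℝ)) :
    min
      (klDiv
        (Measure.pi fun i =>
          Measure.bind
            (ENNReal.ofReal ((1 + θ) / 2) • Measure.dirac (1 : ℝ) +
              ENNReal.ofReal ((1 - θ) / 2) • Measure.dirac (-1 : ℝ)) (fun x => C i x))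
        (Measure.pi fun i =>
          Measure.bind
            (ENNReal.ofReal ((1 - θ) / 2) • Measure.dirac (1 : ℝ) +
              ENNReal.ofReal ((1 + θ) / 2) • Measure.dirac (-1 : ℝ)) (fun x => C i x)))
      (klDiv
        (Measure.pi fun i =>
          Measure.bind
            (ENNReal.ofReal ((1 - θ) / 2) • Measure.dirac (1 : ℝ) +
              ENNReal.ofReal ((1 + θ) / 2) • Measure.dirac (-1 : ℝ)) (fun x => C i x))
        (Measure.pi fun i =>
          Measure.bind
            (ENNReal.ofReal ((1 + θ) / 2) • Measure.dirac (1 : ℝ) +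
              ENNReal.ofReal ((1 - θ) / 2) • Measure.dirac (-1 : ℝ)) (fun x => C i x)))
      ≤ ENNReal.ofReal (8 * θ ^ 2 * ∑ i, (ε i) ^ 2) := by
  obtain ⟨hθ0, hθ1⟩ := hθ
  have ha' : (0:ℝ) ≤ (1 + θ) / 2 := by linarith
  have hb' : (0:ℝ) ≤ (1 - θ) / 2 := by linarith
  -- value formula for binds of two-point mixtures
  have hval : ∀ (p q : ℝ), 0 ≤ p → 0 ≤ q → ∀ (i : Fin n) (s : Set (Y i)), MeasurableSet s →
      (Measure.bind (ENNReal.ofReal p • Measure.dirac (1:ℝ)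
        + ENNReal.ofReal q • Measure.dirac (-1:ℝ)) (fun x => C i x)) s
        = ENNReal.ofReal p * C i 1 s + ENNReal.ofReal q * C i (-1) s := by
    intro p q _ _ i s hs
    rw [Measure.bind_apply hs (Kernel.measurable (C i)).aemeasurable]
    rw [lintegral_add_measure, lintegral_smul_measure, lintegral_smul_measure,
      lintegral_dirac' _ ((C i).measurable_coe hs), lintegral_dirac' _ ((C i).measurable_coe hs),
      smul_eq_mul, smul_eq_mul]
  have hone : ENNReal.ofReal ((1 + θ) / 2) + ENNReal.ofReal ((1 - θ) / 2) = 1 := by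
    rw [← ENNReal.ofReal_add ha' hb', ← ENNReal.ofReal_one]
    congr 1
    ring
  haveI hP1 : ∀ i, IsProbabilityMeasure (Measure.bind
      (ENNReal.ofReal ((1 + θ) / 2) • Measure.dirac (1:ℝ)
        + ENNReal.ofReal ((1 - θ) / 2) • Measure.dirac (-1:ℝ)) (fun x => C i x)) := by
    intro i
    constructor
    rw [hval _ _ ha' hb' i _ MeasurableSet.univ]
    simp only [measure_univ, mul_one]
    exact hone
  haveI hP2 : ∀ i, IsProbabilityMeasure (Measure.bind
      (ENNReal.ofReal ((1 - θ) / 2) • Measure.dirac (1:ℝ)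
        + ENNReal.ofReal ((1 + θ) / 2) • Measure.dirac (-1:ℝ)) (fun x => C i x)) := by
    intro i
    constructor
    rw [hval _ _ hb' ha' i _ MeasurableSet.univ]
    simp only [measure_univ, mul_one]
    rw [add_comm]
    exact hone
  -- LDP inequalities
  have hmem1 : (1:ℝ) ∈ ({-1, 1} : Set ℝ) := by simp
  have hmem2 : (-1:ℝ) ∈ ({-1, 1} : Set ℝ) := by simp
  have hL1 : ∀ i (s : Set (Y i)), MeasurableSet s →
      C i 1 s ≤ ENNReal.ofReal (Real.exp (ε i)) * C i (-1) s :=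
    fun i s hs => hLDP i 1 hmem1 (-1) hmem2 s hs
  have hL2 : ∀ i (s : Set (Y i)), MeasurableSet s →
      C i (-1) s ≤ ENNReal.ofReal (Real.exp (ε i)) * C i 1 s :=
    fun i s hs => hLDP i (-1) hmem2 1 hmem1 s hs
  -- constants
  have hE1 : ∀ i, 1 ≤ Real.exp (ε i) := fun i => Real.one_le_exp (hε i).1.le
  have hE3 : ∀ i, Real.exp (ε i) ≤ 2.7182818286 := fun i =>
    le_trans (Real.exp_le_exp.2 (hε i).2) Real.exp_one_lt_d9.le
  have hc1 : ∀ i, 1 ≤ 1 + θ * (Real.exp (ε i) - 1) := fun i => by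
    nlinarith [mul_nonneg hθ0 (sub_nonneg.2 (hE1 i))]
  -- domination inequalities
  have hdom1 : ∀ i (s : Set (Y i)), MeasurableSet s →
      (Measure.bind (ENNReal.ofReal ((1 + θ) / 2) • Measure.dirac (1:ℝ)
        + ENNReal.ofReal ((1 - θ) / 2) • Measure.dirac (-1:ℝ)) (fun x => C i x)) s
      ≤ ENNReal.ofReal (1 + θ * (Real.exp (ε i) - 1)) *
        (Measure.bind (ENNReal.ofReal ((1 - θ) / 2) • Measure.dirac (1:ℝ)
          + ENNReal.ofReal ((1 + θ) / 2) • Measure.dirac (-1:ℝ)) (fun x => C i x)) s := by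
    intro i s hs
    rw [hval _ _ ha' hb' i s hs, hval _ _ hb' ha' i s hs]
    refine keyIneq hb' (le_trans zero_le_one (hc1 i)) ?_
      (le_trans zero_le_one (hE1 i)) ?_ (hL1 i s hs)
    · have h5 : (0:ℝ) ≤ 2 - (Real.exp (ε i) - 1) * (1 - θ) := by
        nlinarith [mul_nonneg (sub_nonneg.2 (hE1 i)) hθ0, hE3 i]
      nlinarith [mul_nonneg hθ0 h5]
    · nlinarith [mul_nonneg (mul_nonneg hθ0 hb') (sq_nonneg (Real.exp (ε i) - 1))]
  have hdom2 : ∀ i (s : Set (Y i)), MeasurableSet s →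
      (Measure.bind (ENNReal.ofReal ((1 - θ) / 2) • Measure.dirac (1:ℝ)
        + ENNReal.ofReal ((1 + θ) / 2) • Measure.dirac (-1:ℝ)) (fun x => C i x)) s
      ≤ ENNReal.ofReal (1 + θ * (Real.exp (ε i) - 1)) *
        (Measure.bind (ENNReal.ofReal ((1 + θ) / 2) • Measure.dirac (1:ℝ)
          + ENNReal.ofReal ((1 - θ) / 2) • Measure.dirac (-1:ℝ)) (fun x => C i x)) s := by
    intro i s hs
    rw [hval _ _ hb' ha' i s hs, hval _ _ ha' hb' i s hs]
    rw [add_comm (ENNReal.ofReal ((1 - θ) / 2) * C i 1 s),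
      add_comm (ENNReal.ofReal ((1 + θ) / 2) * C i 1 s)]
    refine keyIneq hb' (le_trans zero_le_one (hc1 i)) ?_
      (le_trans zero_le_one (hE1 i)) ?_ (hL2 i s hs)
    · have h5 : (0:ℝ) ≤ 2 - (Real.exp (ε i) - 1) * (1 - θ) := by
        nlinarith [mul_nonneg (sub_nonneg.2 (hE1 i)) hθ0, hE3 i]
      nlinarith [mul_nonneg hθ0 h5]
    · nlinarith [mul_nonneg (mul_nonneg hθ0 hb') (sq_nonneg (Real.exp (ε i) - 1))]
  refine le_trans (min_le_left _ _) (le_trans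
    (klDiv_pi_le _ _ (fun i => 1 + θ * (Real.exp (ε i) - 1)) hc1 hdom1 hdom2) ?_)
  refine ENNReal.ofReal_le_ofReal ?_
  rw [Finset.mul_sum]
  refine Finset.sum_le_sum fun i _ => ?_
  have hε0 : 0 < ε i := (hε i).1
  have hEε : Real.exp (ε i) - 1 ≤ ε i * Real.exp (ε i) := by
    have h := Real.add_one_le_exp (-(ε i))
    rw [Real.exp_neg] at h
    have hEpos : (0:ℝ) < Real.exp (ε i) := Real.exp_pos _
    have := mul_le_mul_of_nonneg_right h hEpos.le
    rw [inv_mul_cancel₀ hEpos.ne'] at this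
    nlinarith
  have k1 : Real.exp (ε i) - 1 ≤ 2.7182818286 * ε i := by
    nlinarith [hE3 i, mul_le_mul_of_nonneg_left (hE3 i) hε0.le]
  have k0 : (0:ℝ) ≤ Real.exp (ε i) - 1 := sub_nonneg.2 (hE1 i)
  have k2 : (Real.exp (ε i) - 1)^2 ≤ (2.7182818286 * ε i)^2 := by nlinarith
  have k3 : (θ * (Real.exp (ε i) - 1))^2 ≤ θ^2 * (2.7182818286 * ε i)^2 := by
    rw [mul_pow]
    exact mul_le_mul_of_nonneg_left k2 (sq_nonneg θ)
  calc (1 + θ * (Real.exp (ε i) - 1) - 1)^2 = (θ * (Real.exp (ε i) - 1))^2 := by ring_nf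
    _ ≤ θ^2 * (2.7182818286 * ε i)^2 := k3
    _ ≤ 8 * θ^2 * ε i^2 := by nlinarith [sq_nonneg (θ * ε i)]
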